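/- Let M be a matroid on E and A ⊆ E. Then cusp(A) = ∅ if and only if A is independent in M or A is spanning in M (equivalently, E∖A is independent in the dual matroid M*). -/

import Mathlib

open Set

variable {α : Type*}

/-- The (natural-number valued) rank of a set `X` in a matroid `M`:
the maximum cardinality of an independent subset of `X`. -/
noncomputable def Matroid.nrk (M : Matroid α) (X : Set α) : ℕ :=
  sSup (Set.ncard '' {I | M.Indep I ∧ I ⊆ X})

/-- The rank of the matroid `M`. -/
noncomputable def Matroid.nRank (M : Matroid α) : ℕ := M.nrk M.E

/-- The cusp of a subset `A` in a matroid `M` of rank `k`: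
all `k`-element subsets `S` of the ground set with `|S ∩ A| ≥ rk A + 1`. -/
def Matroid.cusp (M : Matroid α) (A : Set α) : Set (Set α) :=
  {S | S ⊆ M.E ∧ S.ncard = M.nRank ∧ M.nrk A + 1 ≤ (S ∩ A).ncard}

/-- A subset `A` of a matroid `M` is stressed if both the restriction `M | A`
and the contraction `M / A` are uniform matroids; for a finite matroid this is
equivalent to the rank functions of the restriction and of the contraction being
those of uniform matroids. -/
def Matroid.StressedSubset (M : Matroid α) (A : Set α) : Prop :=
  (∀ S ⊆ A, M.nrk S = min S.ncard (M.nrk A)) ∧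
  (∀ Y ⊆ M.E \ A, M.nrk (A ∪ Y) = M.nrk A + min Y.ncard (M.nRank - M.nrk A))

lemma nrk_bddAbove (M : Matroid α) (hfin : M.E.Finite) (X : Set α) :
    BddAbove (Set.ncard '' {I | M.Indep I ∧ I ⊆ X}) := by
  refine ⟨M.E.ncard, ?_⟩
  rintro n ⟨I, ⟨hI, -⟩, rfl⟩
  exact ncard_le_ncard hI.subset_ground hfin

lemma ncard_le_nrk (M : Matroid α) (hfin : M.E.Finite) {I X : Set α}
    (hI : M.Indep I) (hIX : I ⊆ X) : I.ncard ≤ M.nrk X :=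
  le_csSup (nrk_bddAbove M hfin X) ⟨I, ⟨hI, hIX⟩, rfl⟩

lemma Basis_nrk (M : Matroid α) (hfin : M.E.Finite) {I X : Set α}
    (hI : M.IsBasis I X) : M.nrk X = I.ncard := by
  refine le_antisymm (csSup_le ⟨0, ∅, ⟨M.empty_indep, empty_subset _⟩, by simp⟩ ?_)
    (ncard_le_nrk M hfin hI.indep hI.subset)
  rintro n ⟨J, ⟨hJ, hJX⟩, rfl⟩
  obtain ⟨J', hJ'⟩ := hJ.subset_isBasis_of_subset hJX hI.subset_ground
  have hcard : J'.encard = I.encard := by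
    have h1 := hJ'.1.isBase_restrict
    have h2 := hI.isBase_restrict
    exact h1.encard_eq_encard_of_isBase h2
  have hJ'fin : J'.Finite := hfin.subset hJ'.1.indep.subset_ground
  have hIfin : I.Finite := hfin.subset hI.indep.subset_ground
  calc J.ncard ≤ J'.ncard := ncard_le_ncard hJ'.2 hJ'fin
    _ = I.ncard := by
        rw [ncard_def, ncard_def, hcard]

lemma Base_nRank (M : Matroid α) (hfin : M.E.Finite) {B : Set α}
    (hB : M.IsBase B) : M.nRank = B.ncard :=
  Basis_nrk M hfin hB.isBasis_ground

/-- the cusp of `A` is empty if and only if `A` is independent in `M`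
or `A` is spanning in `M`. -/
theorem cusp_eq_empty_iff (M : Matroid α) (hfin : M.E.Finite) {A : Set α}
    (hA : A ⊆ M.E) :
    M.cusp A = ∅ ↔ M.Indep A ∨ M.Spanning A := by
  have hAfin : A.Finite := hfin.subset hA
  constructor
  · intro h
    by_contra hcon
    push_neg at hcon
    obtain ⟨hnI, hnS⟩ := hcon
    obtain ⟨I, hI⟩ := M.exists_isBasis A hA
    obtain ⟨B, hB⟩ := hI.indep.subset_isBasis_of_subset hI.indep.subset_ground
    have hBbase : M.IsBase B := by
      rw [← Matroid.isBasis_ground_iff]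
      exact hB.1
    have hIfin : I.Finite := hAfin.subset hI.subset
    have hBfin : B.Finite := hfin.subset hBbase.subset_ground
    -- A is not independent, so I ≠ A and there is a ∈ A \ I
    have hIA : I ≠ A := fun he => hnI (he ▸ hI.indep)
    obtain ⟨a, haA, haI⟩ : ∃ a, a ∈ A ∧ a ∉ I := by
      by_contra hno
      push_neg at hno
      exact hIA (hI.subset.antisymm hno)
    -- I is not a base, so I ⊂ B
    have hInb : ¬ M.IsBase I := fun hb => hnS (hb.spanning.superset hI.subset hA)
    have hIBne : I ≠ B := fun he => hInb (he ▸ hBbase)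
    have hrkA : M.nrk A = I.ncard := Basis_nrk M hfin hI
    have hnRank : M.nRank = B.ncard := Base_nRank M hfin hBbase
    have hkey : ∀ S, S ⊆ M.E → S.ncard = M.nRank → M.nrk A + 1 ≤ (S ∩ A).ncard → False := by
      intro S h1 h2 h3
      have : S ∈ M.cusp A := ⟨h1, h2, h3⟩
      simp [h] at this
    have hins : (insert a I).ncard = I.ncard + 1 := ncard_insert_of_notMem haI hIfin
    by_cases haB : a ∈ B
    · refine hkey B hBbase.subset_ground hnRank.symm ?_
      rw [hrkA, ← hins]
      refine ncard_le_ncard ?_ ((hfin.subset hBbase.subset_ground).inter_of_left A)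
      exact insert_subset ⟨haB, haA⟩ fun x hx => ⟨hB.2 hx, hI.subset hx⟩
    · obtain ⟨b, hbB, hbI⟩ : ∃ b, b ∈ B ∧ b ∉ I := by
        by_contra hno
        push_neg at hno
        exact hIBne (hB.2.antisymm hno)
      set S := insert a (B \ {b}) with hS
      have haBb : a ∉ B \ {b} := fun hc => haB hc.1
      have hScard : S.ncard = B.ncard := by
        rw [hS, ncard_insert_of_notMem haBb hBfin.diff,
          ncard_diff_singleton_of_mem hbB]
        have : 1 ≤ B.ncard := by
          rw [Nat.one_le_iff_ne_zero, Ne, ncard_eq_zero hBfin]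
          rintro rfl
          exact hbB
        omega
      refine hkey S (insert_subset (hA haA) (fun x hx => hBbase.subset_ground hx.1))
        (hScard.trans hnRank.symm) ?_
      rw [hrkA, ← hins]
      refine ncard_le_ncard ?_ (((hfin.subset (insert_subset (hA haA)
        (fun x hx => hBbase.subset_ground hx.1))).inter_of_left A))
      refine insert_subset ⟨mem_insert _ _, haA⟩ fun x hx => ⟨?_, hI.subset hx⟩
      exact subset_insert _ _ ⟨hB.2 hx, fun hxb => hbI (hxb ▸ hx)⟩
  · rintro (hInd | hSp)
    · ext S
      simp only [Matroid.cusp, mem_setOf_eq, mem_empty_iff_false, iff_false, not_and]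
      intro _ _ hle
      have : (S ∩ A).ncard ≤ M.nrk A :=
        ncard_le_nrk M hfin (hInd.subset inter_subset_right) inter_subset_right
      omega
    · ext S
      simp only [Matroid.cusp, mem_setOf_eq, mem_empty_iff_false, iff_false, not_and]
      intro hSE hScard hle
      obtain ⟨B, hB, hBA⟩ := hSp.exists_isBase_subset
      have h1 : M.nRank ≤ M.nrk A := by
        rw [Base_nRank M hfin hB]
        exact ncard_le_nrk M hfin hB.indep hBA
      have h2 : (S ∩ A).ncard ≤ S.ncard :=
        ncard_le_ncard inter_subset_left (hfin.subset hSE)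
      omega
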